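/- Let V ⊆ ℂ ≅ ℝ² be an open set, let u, v : V → ℝ be C² functions with Δu ≤ 0 on V (u superharmonic), Δv ≥ 0 on V (v subharmonic), and u(z) > v(z) for all z ∈ V, and let t > 0 and s > 0 be real constants. Then the function z ↦ −log( s (e^{t u(z)} − e^{t v(z)}) ) is C² on V and satisfies Δ( −log( s (e^{tu} − e^{tv}) ) ) ≥ 0 on V, i.e., it is subharmonic. -/

import Mathlib

/-- The Laplacian `Δf = ∂²f/∂x² + ∂²f/∂y²` of `f : ℂ → ℝ`, expressed via the second
(iterated Fréchet) derivative in the directions `1` and `i`. -/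
noncomputable def lap (f : ℂ → ℝ) (z : ℂ) : ℝ :=
  iteratedFDeriv ℝ 2 f z ![1, 1] + iteratedFDeriv ℝ 2 f z ![Complex.I, Complex.I]

private lemma hasFDerivAt_fderiv_apply' {f : ℂ → ℝ} {z a : ℂ}
    (hdf : DifferentiableAt ℝ (fderiv ℝ f) z) :
    HasFDerivAt (fun w => fderiv ℝ f w a) ((fderiv ℝ (fderiv ℝ f) z).flip a) z := by
  simpa using hdf.hasFDerivAt.clm_apply (hasFDerivAt_const a z)


set_option maxHeartbeats 1600000 in
/-- If `u` is C² superharmonic, `v` is C² subharmonic on an open set `V`,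
`u > v` on `V`, and `t, s > 0`, then `z ↦ -log(s (e^{tu(z)} - e^{tv(z)}))` is C² and
subharmonic on `V`. -/
theorem neg_log_diff_exp_subharmonic (V : Set ℂ) (hV : IsOpen V) (u v : ℂ → ℝ)
    (hu : ContDiffOn ℝ 2 u V) (hv : ContDiffOn ℝ 2 v V)
    (hu_super : ∀ z ∈ V, lap u z ≤ 0) (hv_sub : ∀ z ∈ V, 0 ≤ lap v z)
    (huv : ∀ z ∈ V, v z < u z) (t s : ℝ) (ht : 0 < t) (hs : 0 < s) :
    ContDiffOn ℝ 2 (fun z => -Real.log (s * (Real.exp (t * u z) - Real.exp (t * v z)))) V ∧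
    ∀ z ∈ V, 0 ≤ lap (fun z => -Real.log (s * (Real.exp (t * u z) - Real.exp (t * v z)))) z := by
  set F : ℂ → ℝ := fun w => -Real.log (s * (Real.exp (t * u w) - Real.exp (t * v w))) with hFdef
  have hDpos : ∀ w ∈ V, 0 < Real.exp (t * u w) - Real.exp (t * v w) := by
    intro w hw
    have h1 : Real.exp (t * v w) < Real.exp (t * u w) :=
      Real.exp_lt_exp.2 (by have := huv w hw; nlinarith)
    linarith
  have hud : ∀ w ∈ V, HasFDerivAt u (fderiv ℝ u w) w := fun w hw =>
    (((hu w hw).contDiffAt (hV.mem_nhds hw)).differentiableAt (by norm_num)).hasFDerivAt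
  have hvd : ∀ w ∈ V, HasFDerivAt v (fderiv ℝ v w) w := fun w hw =>
    (((hv w hw).contDiffAt (hV.mem_nhds hw)).differentiableAt (by norm_num)).hasFDerivAt
  -- C² of F
  have hF2 : ContDiffOn ℝ 2 F V := by
    intro w hw
    have hcu : ContDiffAt ℝ 2 u w := (hu w hw).contDiffAt (hV.mem_nhds hw)
    have hcv : ContDiffAt ℝ 2 v w := (hv w hw).contDiffAt (hV.mem_nhds hw)
    have hin : ContDiffAt ℝ 2 (fun w => s * (Real.exp (t * u w) - Real.exp (t * v w))) w :=
      contDiffAt_const.mul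
        (((Real.contDiff_exp.contDiffAt).comp w (contDiffAt_const.mul hcu)).sub
          ((Real.contDiff_exp.contDiffAt).comp w (contDiffAt_const.mul hcv)))
    have hne : s * (Real.exp (t * u w) - Real.exp (t * v w)) ≠ 0 :=
      ne_of_gt (mul_pos hs (hDpos w hw))
    exact (((Real.contDiffAt_log.2 hne).comp w hin).neg).contDiffWithinAt
  refine ⟨hF2, ?_⟩
  intro z hz
  -- first derivative of F on V
  have hF' : ∀ w ∈ V, HasFDerivAt F
      ((-(t * Real.exp (t * u w) * (Real.exp (t * u w) - Real.exp (t * v w))⁻¹)) • fderiv ℝ u w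
        + (t * Real.exp (t * v w) * (Real.exp (t * u w) - Real.exp (t * v w))⁻¹) • fderiv ℝ v w)
      w := by
    intro w hw
    have hDw := hDpos w hw
    have hA : HasFDerivAt (fun w => Real.exp (t * u w))
        (Real.exp (t * u w) • (t • fderiv ℝ u w)) w := ((hud w hw).const_mul t).exp
    have hB : HasFDerivAt (fun w => Real.exp (t * v w))
        (Real.exp (t * v w) • (t • fderiv ℝ v w)) w := ((hvd w hw).const_mul t).exp
    have hsD : HasFDerivAt (fun w => s * (Real.exp (t * u w) - Real.exp (t * v w)))
        (s • (Real.exp (t * u w) • (t • fderiv ℝ u w) - Real.exp (t * v w) • (t • fderiv ℝ v w)))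
        w := (hA.sub hB).const_mul s
    have hne : s * (Real.exp (t * u w) - Real.exp (t * v w)) ≠ 0 :=
      ne_of_gt (mul_pos hs hDw)
    have hlog := (Real.hasDerivAt_log hne).comp_hasFDerivAt w hsD
    have h2 := hlog.neg
    have hEq : (-(t * Real.exp (t * u w) * (Real.exp (t * u w) - Real.exp (t * v w))⁻¹)) •
          fderiv ℝ u w
        + (t * Real.exp (t * v w) * (Real.exp (t * u w) - Real.exp (t * v w))⁻¹) • fderiv ℝ v w
        = -((s * (Real.exp (t * u w) - Real.exp (t * v w)))⁻¹ •
            (s • (Real.exp (t * u w) • (t • fderiv ℝ u w)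
              - Real.exp (t * v w) • (t • fderiv ℝ v w)))) := by
      ext ξ
      simp only [ContinuousLinearMap.add_apply, ContinuousLinearMap.coe_smul', Pi.smul_apply,
        ContinuousLinearMap.neg_apply, ContinuousLinearMap.coe_sub', Pi.sub_apply,
        smul_eq_mul]
      field_simp
      ring
    rw [hEq]
    exact h2
  have hGF := fun w hw => (hF' w hw).fderiv
  -- setup at the point z
  set A := Real.exp (t * u z) with hAdef
  set B := Real.exp (t * v z) with hBdef
  have hA0 : 0 < A := Real.exp_pos _
  have hB0 : 0 < B := Real.exp_pos _
  have hD0 : 0 < A - B := hDpos z hz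
  have hdu2 : DifferentiableAt ℝ (fderiv ℝ u) z :=
    (((hu.fderiv_of_isOpen hV (m := 1) (by norm_num)).differentiableOn (by norm_num)) z hz).differentiableAt
      (hV.mem_nhds hz)
  have hdv2 : DifferentiableAt ℝ (fderiv ℝ v) z :=
    (((hv.fderiv_of_isOpen hV (m := 1) (by norm_num)).differentiableOn (by norm_num)) z hz).differentiableAt
      (hV.mem_nhds hz)
  have hdF2 : DifferentiableAt ℝ (fderiv ℝ F) z :=
    (((hF2.fderiv_of_isOpen hV (m := 1) (by norm_num)).differentiableOn (by norm_num)) z hz).differentiableAt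
      (hV.mem_nhds hz)
  have key : ∀ a : ℂ, fderiv ℝ (fderiv ℝ F) z a a =
      -(t * A * (A - B)⁻¹) * (fderiv ℝ (fderiv ℝ u) z a a)
      + (t * B * (A - B)⁻¹) * (fderiv ℝ (fderiv ℝ v) z a a)
      + t ^ 2 * A * B * ((A - B) ^ 2)⁻¹ * (fderiv ℝ u z a - fderiv ℝ v z a) ^ 2 := by
    intro a
    have h1 : HasFDerivAt (fun w => fderiv ℝ F w a) ((fderiv ℝ (fderiv ℝ F) z).flip a) z :=
      hasFDerivAt_fderiv_apply' hdF2
    have heq : (fun w => fderiv ℝ F w a) =ᶠ[nhds z]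
        (fun w => -(t * Real.exp (t * u w) * (Real.exp (t * u w) - Real.exp (t * v w))⁻¹) *
            fderiv ℝ u w a
          + t * Real.exp (t * v w) * (Real.exp (t * u w) - Real.exp (t * v w))⁻¹ *
            fderiv ℝ v w a) := by
      filter_upwards [hV.mem_nhds hz] with w hw
      rw [hGF w hw]
      simp [ContinuousLinearMap.add_apply, ContinuousLinearMap.coe_smul', Pi.smul_apply,
        smul_eq_mul]
    have hAz : HasFDerivAt (fun w => Real.exp (t * u w)) (A • (t • fderiv ℝ u z)) z :=
      ((hud z hz).const_mul t).exp
    have hBz : HasFDerivAt (fun w => Real.exp (t * v w)) (B • (t • fderiv ℝ v z)) z :=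
      ((hvd z hz).const_mul t).exp
    have hDz : HasFDerivAt (fun w => Real.exp (t * u w) - Real.exp (t * v w))
        (A • (t • fderiv ℝ u z) - B • (t • fderiv ℝ v z)) z := hAz.sub hBz
    have hIz : HasFDerivAt (fun w => (Real.exp (t * u w) - Real.exp (t * v w))⁻¹)
        ((-((A - B) ^ 2)⁻¹) • (A • (t • fderiv ℝ u z) - B • (t • fderiv ℝ v z))) z :=
      (hasDerivAt_inv hD0.ne').comp_hasFDerivAt z hDz
    have hα : HasFDerivAt (fun w => fderiv ℝ u w a) ((fderiv ℝ (fderiv ℝ u) z).flip a) z :=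
      hasFDerivAt_fderiv_apply' hdu2
    have hβ : HasFDerivAt (fun w => fderiv ℝ v w a) ((fderiv ℝ (fderiv ℝ v) z).flip a) z :=
      hasFDerivAt_fderiv_apply' hdv2
    have hc1 := (((hAz.const_mul t).mul hIz).neg).mul hα
    have hc2 := ((hBz.const_mul t).mul hIz).mul hβ
    have hbig : HasFDerivAt (fun w =>
        -(t * Real.exp (t * u w) * (Real.exp (t * u w) - Real.exp (t * v w))⁻¹) * fderiv ℝ u w a +
          t * Real.exp (t * v w) * (Real.exp (t * u w) - Real.exp (t * v w))⁻¹ * fderiv ℝ v w a)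
        _ z := hc1.add hc2
    have hfd := heq.fderiv_eq (𝕜 := ℝ)
    calc fderiv ℝ (fderiv ℝ F) z a a
        = ((fderiv ℝ (fderiv ℝ F) z).flip a) a := rfl
      _ = fderiv ℝ (fun w => fderiv ℝ F w a) z a := by rw [h1.fderiv]
      _ = _ := by
          rw [hfd, hbig.fderiv]
          simp only [ContinuousLinearMap.add_apply, ContinuousLinearMap.coe_smul',
            Pi.smul_apply, ContinuousLinearMap.neg_apply, ContinuousLinearMap.coe_sub',
            Pi.sub_apply, ContinuousLinearMap.flip_apply, smul_eq_mul, Pi.neg_apply, Pi.mul_apply]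
          rw [← hAdef, ← hBdef]
          field_simp
          ring
  -- conclude
  have hLu : fderiv ℝ (fderiv ℝ u) z 1 1 + fderiv ℝ (fderiv ℝ u) z Complex.I Complex.I ≤ 0 := by
    have := hu_super z hz
    unfold lap at this
    rw [iteratedFDeriv_two_apply, iteratedFDeriv_two_apply] at this
    simpa using this
  have hLv : 0 ≤ fderiv ℝ (fderiv ℝ v) z 1 1 + fderiv ℝ (fderiv ℝ v) z Complex.I Complex.I := by
    have := hv_sub z hz
    unfold lap at this
    rw [iteratedFDeriv_two_apply, iteratedFDeriv_two_apply] at this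
    simpa using this
  have hlapF : lap F z = fderiv ℝ (fderiv ℝ F) z 1 1
      + fderiv ℝ (fderiv ℝ F) z Complex.I Complex.I := by
    unfold lap
    rw [iteratedFDeriv_two_apply, iteratedFDeriv_two_apply]
    simp
  rw [hlapF, key 1, key Complex.I]
  have p1 : 0 < t * A * (A - B)⁻¹ := mul_pos (mul_pos ht hA0) (inv_pos.2 hD0)
  have p2 : 0 < t * B * (A - B)⁻¹ := mul_pos (mul_pos ht hB0) (inv_pos.2 hD0)
  have p3 : 0 ≤ t ^ 2 * A * B * ((A - B) ^ 2)⁻¹ :=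
    le_of_lt (mul_pos (mul_pos (mul_pos (pow_pos ht 2) hA0) hB0) (inv_pos.2 (pow_pos hD0 2)))
  nlinarith [mul_nonneg p1.le (neg_nonneg.2 hLu), mul_nonneg p2.le hLv,
    mul_nonneg p3 (sq_nonneg (fderiv ℝ u z 1 - fderiv ℝ v z 1)),
    mul_nonneg p3 (sq_nonneg (fderiv ℝ u z Complex.I - fderiv ℝ v z Complex.I))]
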